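/- Let μ be a directed distance on a nonempty finite set S. (1) A point p ∈ P_μ belongs to T_μ if and only if there is no s ∈ S with p^c(s) > 0 and p^c(s) + p^r(t) > μ(s,t) for every t ∈ S, and no s ∈ S with p^r(s) > 0 and p^c(t) + p^r(s) > μ(t,s) for every t ∈ S. (2) A point p ∈ Π_μ belongs to Q_μ if and only if for every s ∈ S there exists t ∈ S with p^c(s) + p^r(t) = μ(s,t) and there exists u ∈ S with p^c(u) + p^r(s) = μ(u,s). -/

import Mathlib

open scoped BigOperators

/-- Points of `ℝ^{S^{cr}}`: pairs `p = (p^c, p^r)` of functions `S → ℝ`,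
with the componentwise partial order (the product/pi order). -/
abbrev Pt (S : Type*) := (S → ℝ) × (S → ℝ)

/-- `μ` is a directed distance: nonnegative with zero diagonal. -/
def DirDist {S : Type*} (μ : S → S → ℝ) : Prop :=
  (∀ s t, 0 ≤ μ s t) ∧ (∀ s, μ s s = 0)

/-- `d` is a directed metric: a directed distance satisfying the triangle inequality. -/
def DirMetric {V : Type*} (d : V → V → ℝ) : Prop :=
  DirDist d ∧ ∀ x y z, d x z ≤ d x y + d y z

/-- The polyhedron `Π_μ`. -/
def PiP {S : Type*} (μ : S → S → ℝ) : Set (Pt S) :=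
  {p | ∀ s t, μ s t ≤ p.1 s + p.2 t}

/-- The polyhedron `P_μ = Π_μ ∩ ℝ_+^{S^{cr}}`. -/
def PP {S : Type*} (μ : S → S → ℝ) : Set (Pt S) :=
  {p ∈ PiP μ | 0 ≤ p}

/-- The directed tight span `T_μ`: minimal elements of `P_μ`. -/
def TT {S : Type*} (μ : S → S → ℝ) : Set (Pt S) :=
  {p ∈ PP μ | ∀ q ∈ PP μ, q ≤ p → q = p}

/-- `Q_μ`: minimal elements of `Π_μ`. -/
def QQ {S : Type*} (μ : S → S → ℝ) : Set (Pt S) :=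
  {p ∈ PiP μ | ∀ q ∈ PiP μ, q ≤ p → q = p}

/-- `Q_μ^+ = Q_μ ∩ ℝ_+^{S^{cr}}`. -/
def QP {S : Type*} (μ : S → S → ℝ) : Set (Pt S) :=
  QQ μ ∩ {p | 0 ≤ p}

/-- `D_∞^+(f,g) = max_x (g(x) - f(x))_+`. -/
noncomputable def Dplus {X : Type*} [Fintype X] (f g : X → ℝ) : ℝ :=
  ⨆ x, max (g x - f x) 0

/-- `D_∞(p,q) = max ( D_∞^+(p^c,q^c), D_∞^+(q^r,p^r) )`. -/
noncomputable def Dinf {S : Type*} [Fintype S] (p q : Pt S) : ℝ :=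
  max (Dplus p.1 q.1) (Dplus q.2 p.2)

/-- A subset `R` is balanced if no pair `p, q ∈ R` satisfies `p^c < q^c`,
and no pair satisfies `p^r < q^r`. -/
def BalancedSet {S : Type*} (R : Set (Pt S)) : Prop :=
  (¬ ∃ p ∈ R, ∃ q ∈ R, ∀ s, p.1 s < q.1 s) ∧
  (¬ ∃ p ∈ R, ∃ q ∈ R, ∀ s, p.2 s < q.2 s)

/-- The vector `e = (1, -1)` spanning the linearity space of `Π_μ`. -/
def eVec (S : Type*) : Pt S := (fun _ => 1, fun _ => -1)

/-- `R ⊆ Q_μ` is a section: every point of `Q_μ` differs from exactly one point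
of `R` by a multiple of `e`. -/
def IsSection {S : Type*} (μ : S → S → ℝ) (R : Set (Pt S)) : Prop :=
  R ⊆ QQ μ ∧ ∀ q ∈ QQ μ, ∃! p, p ∈ R ∧ ∃ α : ℝ, q - p = α • eVec S

/-- The length of the cycle `(x 0, x 1, …, x m)` with respect to `d`. -/
def cycLen {V : Type*} (d : V → V → ℝ) (m : ℕ) (x : Fin (m + 1) → V) : ℝ :=
  ∑ i, d (x i) (x (i + 1))



private lemma auxDec {S : Type*} [Fintype S] [Nonempty S] (μ : S → S → ℝ)
    (p : Pt S) (hp : p ∈ PiP μ) (s : S)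
    (h : ∀ t, μ s t < p.1 s + p.2 t) (c : ℝ) (hc : 0 < c) :
    ∃ q : Pt S, q ∈ PiP μ ∧ q ≤ p ∧ q ≠ p ∧ q.2 = p.2 ∧
      (∀ u, u ≠ s → q.1 u = p.1 u) ∧ p.1 s - c ≤ q.1 s := by
  classical
  obtain ⟨t0, -, ht0⟩ := Finset.exists_min_image Finset.univ
    (fun t => p.1 s + p.2 t - μ s t) ⟨Classical.arbitrary S, Finset.mem_univ _⟩
  set ε := min (p.1 s + p.2 t0 - μ s t0) c with hεdef
  have hεpos : 0 < ε := lt_min (by linarith [h t0]) hc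
  have hεle : ∀ t, ε ≤ p.1 s + p.2 t - μ s t := fun t =>
    le_trans (min_le_left _ _) (ht0 t (Finset.mem_univ t))
  refine ⟨(fun u => if u = s then p.1 s - ε else p.1 u, p.2), ?_, ?_, ?_, rfl, ?_, ?_⟩
  · intro s' t
    by_cases hs' : s' = s
    · subst hs'; simp only [if_pos rfl, eq_self_iff_true, if_true]; linarith [hεle t]
    · simp only [if_neg hs']; exact hp s' t
  · refine Prod.le_def.mpr ⟨fun u => ?_, le_refl _⟩
    by_cases hu : u = s
    · subst hu; simp; linarith
    · simp [hu]
  · intro hqp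
    have := congrFun (congrArg Prod.fst hqp) s
    simp at this; linarith
  · intro u hu; simp [hu]
  · simp; linarith [min_le_right (p.1 s + p.2 t0 - μ s t0) c]

private lemma swapPiP {S : Type*} (μ : S → S → ℝ) (p : Pt S) (hp : p ∈ PiP μ) :
    (p.2, p.1) ∈ PiP (fun a b => μ b a) := by
  intro s t; have := hp t s; dsimp only; linarith

/-- Lemma 2.1 (minimality criteria).  (1) A point `p ∈ P_μ` belongs to `T_μ` iff
there is no `s` with `p^c(s) > 0` and `p^c(s) + p^r(t) > μ(s,t)` for all `t`, and
no `s` with `p^r(s) > 0` and `p^c(t) + p^r(s) > μ(t,s)` for all `t`.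
(2) A point `p ∈ Π_μ` belongs to `Q_μ` iff every `s` admits `t` with
`p^c(s) + p^r(t) = μ(s,t)` and `u` with `p^c(u) + p^r(s) = μ(u,s)`. -/
theorem stmt0 {S : Type*} [Fintype S] [Nonempty S] (μ : S → S → ℝ)
    (hμ : DirDist μ) :
    (∀ p ∈ PP μ, (p ∈ TT μ ↔
      (¬ ∃ s, 0 < p.1 s ∧ ∀ t, μ s t < p.1 s + p.2 t) ∧
      (¬ ∃ s, 0 < p.2 s ∧ ∀ t, μ t s < p.1 t + p.2 s))) ∧
    (∀ p ∈ PiP μ, (p ∈ QQ μ ↔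
      ∀ s, (∃ t, p.1 s + p.2 t = μ s t) ∧ (∃ u, p.1 u + p.2 s = μ u s))) := by
  classical
  obtain ⟨hμ0, hμd⟩ := hμ
  constructor
  · intro p hp
    constructor
    · rintro ⟨hpP, hmin⟩
      obtain ⟨hpPi, hpnn⟩ := hpP
      constructor
      · rintro ⟨s, hs0, hst⟩
        obtain ⟨q, hqPi, hqle, hqne, hq2, hq1, hq1s⟩ :=
          auxDec μ p hpPi s hst (p.1 s) hs0
        have hq0 : (0 : Pt S) ≤ q := by
          refine Prod.le_def.mpr ⟨fun u => ?_, fun u => ?_⟩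
          · by_cases hu : u = s
            · subst hu; simpa using hq1s
            · rw [hq1 u hu]; exact (Prod.le_def.mp hpnn).1 u
          · rw [hq2]; exact (Prod.le_def.mp hpnn).2 u
        exact hqne (hmin q ⟨hqPi, hq0⟩ hqle)
      · rintro ⟨s, hs0, hst⟩
        obtain ⟨q, hqPi, hqle, hqne, hq2, hq1, hq1s⟩ :=
          auxDec (fun a b => μ b a) (p.2, p.1) (swapPiP μ p hpPi) s
            (fun t => by have := hst t; dsimp only; linarith) (p.2 s) hs0
        set q' : Pt S := (q.2, q.1) with hq'
        have hq'Pi : q' ∈ PiP μ := by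
          intro a b; have := hqPi b a; rw [hq']; simp only at this ⊢; linarith
        have hq'le : q' ≤ p := by
          have := Prod.le_def.mp hqle
          exact Prod.le_def.mpr ⟨this.2, this.1⟩
        have hq'0 : (0 : Pt S) ≤ q' := by
          refine Prod.le_def.mpr ⟨fun u => ?_, fun u => ?_⟩
          · have : q.2 u = p.1 u := congrFun hq2 u
            rw [hq']; simp only; rw [this]; exact (Prod.le_def.mp hpnn).1 u
          · by_cases hu : u = s
            · subst hu; simpa using hq1s
            · rw [hq']; simp only; rw [hq1 u hu]; exact (Prod.le_def.mp hpnn).2 u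
        have := hmin q' ⟨hq'Pi, hq'0⟩ hq'le
        apply hqne
        have h1 : q.1 = p.2 := congrArg Prod.snd this
        have h2 : q.2 = p.1 := congrArg Prod.fst this
        exact Prod.ext h1 h2
    · rintro ⟨h1, h2⟩
      refine ⟨hp, fun q hq hqle => ?_⟩
      obtain ⟨hqPi, hqnn⟩ := hq
      obtain ⟨hpPi, hpnn⟩ := hp
      have hc : ∀ u, q.1 u = p.1 u := by
        intro u
        by_contra hne
        have hlt : q.1 u < p.1 u := lt_of_le_of_ne ((Prod.le_def.mp hqle).1 u) hne
        exact h1 ⟨u, lt_of_le_of_lt ((Prod.le_def.mp hqnn).1 u) hlt,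
          fun t => lt_of_le_of_lt (hqPi u t)
            (by linarith [(Prod.le_def.mp hqle).2 t])⟩
      have hr : ∀ u, q.2 u = p.2 u := by
        intro u
        by_contra hne
        have hlt : q.2 u < p.2 u := lt_of_le_of_ne ((Prod.le_def.mp hqle).2 u) hne
        exact h2 ⟨u, lt_of_le_of_lt ((Prod.le_def.mp hqnn).2 u) hlt,
          fun t => lt_of_le_of_lt (hqPi t u)
            (by linarith [(Prod.le_def.mp hqle).1 t])⟩
      exact Prod.ext (funext hc) (funext hr)
  · intro p hp
    constructor
    · rintro ⟨hpPi, hmin⟩ s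
      constructor
      · by_contra hno
        push_neg at hno
        have hst : ∀ t, μ s t < p.1 s + p.2 t :=
          fun t => lt_of_le_of_ne (hpPi s t) (Ne.symm (hno t))
        obtain ⟨q, hqPi, hqle, hqne, -⟩ := auxDec μ p hpPi s hst 1 one_pos
        exact hqne (hmin q hqPi hqle)
      · by_contra hno
        push_neg at hno
        have hst : ∀ t, μ t s < p.1 t + p.2 s :=
          fun t => lt_of_le_of_ne (hpPi t s) (Ne.symm (hno t))
        obtain ⟨q, hqPi, hqle, hqne, hq2, -⟩ :=
          auxDec (fun a b => μ b a) (p.2, p.1) (swapPiP μ p hpPi) s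
            (fun t => by have := hst t; dsimp only; linarith) 1 one_pos
        set q' : Pt S := (q.2, q.1) with hq'
        have hq'Pi : q' ∈ PiP μ := by
          intro a b; have := hqPi b a; rw [hq']; simp only at this ⊢; linarith
        have hq'le : q' ≤ p := by
          have := Prod.le_def.mp hqle
          exact Prod.le_def.mpr ⟨this.2, this.1⟩
        have := hmin q' hq'Pi hq'le
        exact hqne (Prod.ext (congrArg Prod.snd this) (congrArg Prod.fst this))
    · intro htight
      refine ⟨hp, fun q hq hqle => ?_⟩
      have hc1 : ∀ s, q.1 s = p.1 s := by
        intro s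
        obtain ⟨⟨t, ht⟩, -⟩ := htight s
        have h1 := hq s t
        have h2 := (Prod.le_def.mp hqle).1 s
        have h3 := (Prod.le_def.mp hqle).2 t
        linarith
      have hc2 : ∀ s, q.2 s = p.2 s := by
        intro s
        obtain ⟨-, ⟨u, hu⟩⟩ := htight s
        have h1 := hq u s
        have h2 := (Prod.le_def.mp hqle).1 u
        have h3 := (Prod.le_def.mp hqle).2 s
        linarith
      exact Prod.ext (funext hc1) (funext hc2)
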